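/- arXiv:2411.04120 — 3 statements merged into one kernel-verified Lean document; each statement's English description precedes it below -/
import Mathlib

section
/- Let ρ be a density matrix on (ℂ²)^⊗3 (positive semidefinite, trace 1) with real entries, and set x = tr(ρ SWAP₁₂), y = tr(ρ SWAP₁₃), z = tr(ρ SWAP₂₃). Then 0 ≤ x + y + z ≤ 3 (Lieb–Mattis inequality). -/
open Matrix
open scoped ComplexOrder

/-- The permutation operator `T(π)` on `(ℂ^d)^⊗n`, sending the basis vector
`e_f` to `e_{f ∘ π⁻¹}`. -/
noncomputable def permOp (n d : ℕ) (π : Equiv.Perm (Fin n)) :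
    Matrix (Fin n → Fin d) (Fin n → Fin d) ℂ :=
  Matrix.of fun i j => if i = j ∘ ⇑π.symm then 1 else 0

/-- The swap operator exchanging tensor factors `i` and `j` of `(ℂ²)^⊗n`. -/
noncomputable def swapOp (n : ℕ) (i j : Fin n) :
    Matrix (Fin n → Fin 2) (Fin n → Fin 2) ℂ :=
  permOp n 2 (Equiv.swap i j)

abbrev LMIdx := Fin 3 → Fin 2

/-- Integer version of the sum of the three swaps. -/
def LMz : Matrix LMIdx LMIdx ℤ := Matrix.of fun i j =>
  (if i = j ∘ ⇑(Equiv.swap (0:Fin 3) 1).symm then 1 else 0) +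
  (if i = j ∘ ⇑(Equiv.swap (0:Fin 3) 2).symm then 1 else 0) +
  (if i = j ∘ ⇑(Equiv.swap (1:Fin 3) 2).symm then 1 else 0)

noncomputable def LM : Matrix LMIdx LMIdx ℂ :=
  swapOp 3 0 1 + swapOp 3 0 2 + swapOp 3 1 2

lemma LM_eq : LM = (Int.castRingHom ℂ).mapMatrix LMz := by
  ext i j
  simp only [LM, LMz, swapOp, permOp, RingHom.mapMatrix_apply, Matrix.map_apply, Matrix.add_apply,
    Matrix.of_apply, Int.cast_add, Int.cast_ite, Int.cast_one, Int.cast_zero, eq_intCast]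

lemma LMz_sq : LMz * LMz = LMz + LMz + LMz := by decide

lemma LMz_symm : ∀ i j, LMz i j = LMz j i := by
  have h : LMzᵀ = LMz := by decide
  intro i j
  exact congrFun (congrFun h j) i

lemma LM_sq : LM * LM = (3:ℂ) • LM := by
  have := congrArg (Int.castRingHom ℂ).mapMatrix LMz_sq
  simp only [_root_.map_mul, _root_.map_add] at this
  rw [LM_eq, this]
  ext i j
  simp [Matrix.add_apply, Matrix.smul_apply]
  ring

lemma LM_herm : LMᴴ = LM := by
  rw [LM_eq]
  ext i j
  simp only [conjTranspose_apply, RingHom.mapMatrix_apply, Matrix.map_apply]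
  rw [LMz_symm j i]
  simp [Complex.star_def]

lemma smul_posSemidef {A : Matrix LMIdx LMIdx ℂ} (hA : A.PosSemidef)
    {c : ℝ} (hc : 0 ≤ c) : ((c : ℂ) • A).PosSemidef := by
  constructor
  · unfold Matrix.IsHermitian
    rw [Matrix.conjTranspose_smul, hA.1.eq]
    congr 1
    simp [Complex.star_def]
  · exact (hA.smul (Complex.zero_le_real.mpr hc)).2

lemma psd_of_sq {A : Matrix LMIdx LMIdx ℂ} (hH : Aᴴ = A)
    (hsq : A * A = (3:ℂ) • A) : A.PosSemidef := by
  have h1 : (Aᴴ * A).PosSemidef := Matrix.posSemidef_conjTranspose_mul_self A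
  rw [hH, hsq] at h1
  have h2 := smul_posSemidef h1 (c := (3:ℝ)⁻¹) (by norm_num)
  have : ((3⁻¹ : ℝ) : ℂ) • ((3:ℂ) • A) = A := by
    rw [smul_smul]
    norm_num
  rwa [this] at h2

lemma LM_psd : LM.PosSemidef := psd_of_sq LM_herm LM_sq

noncomputable def LMc : Matrix LMIdx LMIdx ℂ := (3:ℂ) • 1 - LM

lemma LMc_psd : LMc.PosSemidef := by
  apply psd_of_sq
  · unfold LMc
    rw [Matrix.conjTranspose_sub, Matrix.conjTranspose_smul, LM_herm,
      Matrix.conjTranspose_one]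
    congr 1
    simp [Complex.star_def]
  · unfold LMc
    rw [sub_mul, mul_sub, mul_sub, smul_sub, LM_sq]
    simp only [Matrix.smul_mul, Matrix.mul_smul, Matrix.one_mul, Matrix.mul_one,
      smul_smul]
    abel_nf

lemma trace_nonneg_of_psd {A : Matrix LMIdx LMIdx ℂ} (hA : A.PosSemidef) :
    0 ≤ A.trace := by
  rw [Matrix.trace]
  apply Finset.sum_nonneg
  intro i _
  exact hA.diag_nonneg

open scoped MatrixOrder in
lemma trace_mul_psd_nonneg (ρ A : Matrix LMIdx LMIdx ℂ)
    (hρ : ρ.PosSemidef) (hA : A.PosSemidef) : 0 ≤ (ρ * A).trace := by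
  obtain ⟨s, hherm, hs⟩ : ∃ s : Matrix LMIdx LMIdx ℂ, sᴴ = s ∧ s * s = ρ :=
    ⟨CFC.sqrt ρ, (Matrix.nonneg_iff_posSemidef.mp (CFC.sqrt_nonneg ρ)).1,
      CFC.sqrt_mul_sqrt_self ρ (Matrix.nonneg_iff_posSemidef.mpr hρ)⟩
  have key : (ρ * A).trace = (s * A * sᴴ).trace := by
    rw [hherm, ← hs, Matrix.mul_assoc, Matrix.trace_mul_comm s (s * A)]
  rw [key]
  exact trace_nonneg_of_psd (hA.mul_mul_conjTranspose_same s)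

theorem lieb_mattis (ρ : Matrix (Fin 3 → Fin 2) (Fin 3 → Fin 2) ℂ)
    (hpsd : ρ.PosSemidef) (htr : ρ.trace = 1)
    (hreal : ∀ i j, (ρ i j).im = 0)
    (x y z : ℝ)
    (hx : x = (Matrix.trace (ρ * swapOp 3 0 1)).re)
    (hy : y = (Matrix.trace (ρ * swapOp 3 0 2)).re)
    (hz : z = (Matrix.trace (ρ * swapOp 3 1 2)).re) :
    0 ≤ x + y + z ∧ x + y + z ≤ 3 := by
  have hsum : ((ρ * LM).trace).re = x + y + z := by
    rw [hx, hy, hz, LM, Matrix.mul_add, Matrix.mul_add, Matrix.trace_add,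
      Matrix.trace_add]
    simp [Complex.add_re]
  have h1 : 0 ≤ (ρ * LM).trace := trace_mul_psd_nonneg ρ LM hpsd LM_psd
  have h2 : 0 ≤ (ρ * LMc).trace := trace_mul_psd_nonneg ρ LMc hpsd LMc_psd
  have h2' : (ρ * LMc).trace = 3 - (ρ * LM).trace := by
    rw [LMc, Matrix.mul_sub, Matrix.trace_sub, Matrix.mul_smul,
      Matrix.mul_one, Matrix.trace_smul, htr]
    simp
  rw [h2'] at h2
  rw [Complex.le_def] at h1 h2
  constructor
  · rw [← hsum]; simpa using h1.1
  · rw [← hsum]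
    have := h2.1
    simp only [Complex.zero_re, Complex.sub_re] at this
    norm_num at this ⊢
    linarith
end

section
/- Let ρ be a density matrix on (ℂ²)^⊗3 with ρᵀ = ρ, and set x = tr(ρ SWAP₁₂), y = tr(ρ SWAP₁₃), z = tr(ρ SWAP₂₃). Then (x² + y² + z²) − 2(xy + xz + yz) + 2(x + y + z) ≤ 3 (Parekh–Thompson triangle inequality). -/
open Matrix
open scoped ComplexOrder

lemma permOp_mul (n d : ℕ) (π σ : Equiv.Perm (Fin n)) :
    permOp n d π * permOp n d σ = permOp n d (π * σ) := by
  ext i j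
  simp only [permOp, Matrix.mul_apply, Matrix.of_apply]
  rw [Finset.sum_eq_single (j ∘ ⇑σ.symm)]
  · have : (j ∘ ⇑σ.symm) ∘ ⇑π.symm = j ∘ ⇑(π * σ).symm := by
      funext t
      simp [← Equiv.Perm.inv_def, _root_.mul_inv_rev, Equiv.Perm.mul_apply]
    simp [this]
  · intro k _ hk
    simp [hk]
  · simp

lemma comp_symm_eq (n d : ℕ) (π : Equiv.Perm (Fin n)) (i j : Fin n → Fin d) :
    j = i ∘ ⇑π.symm ↔ i = j ∘ ⇑π⁻¹.symm := by
  constructor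
  · rintro rfl; funext t
    simp [← Equiv.Perm.inv_def, inv_inv, Function.comp, Equiv.symm_apply_apply]
    rw [Equiv.symm_apply_apply]
  · rintro rfl; funext t
    simp [← Equiv.Perm.inv_def, inv_inv, Function.comp, Equiv.apply_symm_apply]

lemma permOp_conjTranspose (n d : ℕ) (π : Equiv.Perm (Fin n)) :
    (permOp n d π)ᴴ = permOp n d π⁻¹ := by
  ext i j
  simp only [permOp, Matrix.conjTranspose_apply, Matrix.of_apply, apply_ite, map_zero,
    RingHom.map_one]
  rw [if_congr (comp_symm_eq n d π i j).symm rfl rfl]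
  split <;> simp

lemma permOp_transpose (n d : ℕ) (π : Equiv.Perm (Fin n)) :
    (permOp n d π)ᵀ = permOp n d π⁻¹ := by
  ext i j
  simp only [permOp, Matrix.transpose_apply, Matrix.of_apply]
  rw [if_congr (comp_symm_eq n d π i j).symm rfl rfl]

lemma permOp_one (n d : ℕ) : permOp n d 1 = 1 := by
  ext i j
  simp only [permOp, Matrix.of_apply]
  by_cases h : i = j
  · simp [h, Matrix.one_apply, Equiv.Perm.one_symm]
  · have h2 : ¬ i = j ∘ ⇑(Equiv.symm (1:Equiv.Perm (Fin n))) := by simpa [Equiv.Perm.one_symm] using h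
    simp [h, h2, Matrix.one_apply]

def ppa : Equiv.Perm (Fin 3) := Equiv.swap 0 1
def ppb : Equiv.Perm (Fin 3) := Equiv.swap 0 2
def ppc : Equiv.Perm (Fin 3) := Equiv.swap 1 2
def pw1 : Equiv.Perm (Fin 3) := ppc * ppa
def pw2 : Equiv.Perm (Fin 3) := ppc * ppb

noncomputable def PP : Equiv.Perm (Fin 3) → Matrix (Fin 3 → Fin 2) (Fin 3 → Fin 2) ℂ :=
  permOp 3 2

lemma taa : ppa * ppa = 1 := by decide
lemma tab : ppa * ppb = pw1 := by decide
lemma tac : ppa * ppc = pw2 := by decide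
lemma ta1 : ppa * pw1 = ppb := by decide
lemma ta2 : ppa * pw2 = ppc := by decide
lemma tba : ppb * ppa = pw2 := by decide
lemma tbb : ppb * ppb = 1 := by decide
lemma tbc : ppb * ppc = pw1 := by decide
lemma tb1 : ppb * pw1 = ppc := by decide
lemma tb2 : ppb * pw2 = ppa := by decide
lemma tca : ppc * ppa = pw1 := by decide
lemma tcb : ppc * ppb = pw2 := by decide
lemma tcc : ppc * ppc = 1 := by decide
lemma tc1 : ppc * pw1 = ppa := by decide
lemma tc2 : ppc * pw2 = ppb := by decide
lemma t1a : pw1 * ppa = ppc := by decide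
lemma t1b : pw1 * ppb = ppa := by decide
lemma t1c : pw1 * ppc = ppb := by decide
lemma t11 : pw1 * pw1 = pw2 := by decide
lemma t12 : pw1 * pw2 = 1 := by decide
lemma t2a : pw2 * ppa = ppb := by decide
lemma t2b : pw2 * ppb = ppc := by decide
lemma t2c : pw2 * ppc = ppa := by decide
lemma t21 : pw2 * pw1 = 1 := by decide
lemma t22 : pw2 * pw2 = pw1 := by decide

lemma ia : ppa⁻¹ = ppa := by decide
lemma ib : ppb⁻¹ = ppb := by decide
lemma ic : ppc⁻¹ = ppc := by decide
lemma i1 : pw1⁻¹ = pw2 := by decide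
lemma i2 : pw2⁻¹ = pw1 := by decide

noncomputable def AA : Matrix (Fin 3 → Fin 2) (Fin 3 → Fin 2) ℂ :=
  (3:ℂ) • PP 1 + PP ppc - (2:ℂ) • PP ppa - (2:ℂ) • PP ppb
noncomputable def BB : Matrix (Fin 3 → Fin 2) (Fin 3 → Fin 2) ℂ :=
  PP ppa - PP ppb + PP pw1 - PP pw2
noncomputable def BBH : Matrix (Fin 3 → Fin 2) (Fin 3 → Fin 2) ℂ :=
  PP ppa - PP ppb + PP pw2 - PP pw1
noncomputable def MS : Matrix (Fin 3 → Fin 2) (Fin 3 → Fin 2) ℂ :=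
  PP 1 - PP ppa - PP ppb - PP ppc + PP pw1 + PP pw2

lemma idAA : AA * AA =
    (18:ℂ) • PP 1 + (6:ℂ) • PP ppc - (12:ℂ) • PP ppa - (12:ℂ) • PP ppb := by
  simp only [AA, PP, add_mul, sub_mul, mul_add, mul_sub, smul_mul_assoc, mul_smul_comm,
    permOp_mul, smul_smul, one_mul, mul_one, taa, tab, tac, tba, tbb, tbc, tca, tcb, tcc]
  module

lemma idBB : BBH * BB =
    (4:ℂ) • PP 1 + (2:ℂ) • PP ppa + (2:ℂ) • PP ppb - (4:ℂ) • PP ppc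
      - (2:ℂ) • PP pw1 - (2:ℂ) • PP pw2 := by
  simp only [BBH, BB, PP, add_mul, sub_mul, mul_add, mul_sub, permOp_mul, one_mul, mul_one,
    taa, tab, tac, ta1, ta2, tba, tbb, tbc, tb1, tb2, t1a, t1b, t1c, t11, t12,
    t2a, t2b, t2c, t21, t22]
  module

lemma idBA : BBH * AA =
    (6:ℂ) • PP ppa - (6:ℂ) • PP ppb - (6:ℂ) • PP pw1 + (6:ℂ) • PP pw2 := by
  simp only [BBH, AA, PP, add_mul, sub_mul, mul_add, mul_sub, smul_mul_assoc, mul_smul_comm,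
    permOp_mul, one_mul, mul_one, taa, tab, tac, ta1, ta2, tba, tbb, tbc, tb1, tb2,
    tca, tcb, tcc, tc1, tc2, t1a, t1b, t1c, t11, t12, t2a, t2b, t2c, t21, t22]
  module

lemma idAB : AA * BB =
    (6:ℂ) • PP ppa - (6:ℂ) • PP ppb + (6:ℂ) • PP pw1 - (6:ℂ) • PP pw2 := by
  simp only [BB, AA, PP, add_mul, sub_mul, mul_add, mul_sub, smul_mul_assoc, mul_smul_comm,
    permOp_mul, one_mul, mul_one, taa, tab, tac, ta1, ta2, tba, tbb, tbc, tb1, tb2,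
    tca, tcb, tcc, tc1, tc2, t1a, t1b, t1c, t11, t12, t2a, t2b, t2c, t21, t22]
  module

lemma idMS : MS * MS = (6:ℂ) • MS := by
  simp only [MS, PP, add_mul, sub_mul, mul_add, mul_sub, permOp_mul, one_mul, mul_one,
    taa, tab, tac, ta1, ta2, tba, tbb, tbc, tb1, tb2,
    tca, tcb, tcc, tc1, tc2, t1a, t1b, t1c, t11, t12, t2a, t2b, t2c, t21, t22, smul_add, smul_sub]
  module

lemma hAH : AAᴴ = AA := by
  simp only [AA, PP, conjTranspose_add, conjTranspose_sub, conjTranspose_smul,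
    permOp_conjTranspose, ia, ib, ic, inv_one, star_ofNat]

lemma hBH : BBᴴ = BBH := by
  simp only [BB, BBH, PP, conjTranspose_add, conjTranspose_sub,
    permOp_conjTranspose, ia, ib, i1, i2]

lemma hMSH : MSᴴ = MS := by
  simp only [MS, PP, conjTranspose_add, conjTranspose_sub, permOp_conjTranspose,
    ia, ib, ic, i1, i2, inv_one]
  module

theorem parekh_thompson (ρ : Matrix (Fin 3 → Fin 2) (Fin 3 → Fin 2) ℂ)
    (hpsd : ρ.PosSemidef) (htr : ρ.trace = 1)
    (hT : ρᵀ = ρ)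
    (x y z : ℝ)
    (hx : x = (Matrix.trace (ρ * swapOp 3 0 1)).re)
    (hy : y = (Matrix.trace (ρ * swapOp 3 0 2)).re)
    (hz : z = (Matrix.trace (ρ * swapOp 3 1 2)).re) :
    (x ^ 2 + y ^ 2 + z ^ 2) - 2 * (x * y + x * z + y * z) + 2 * (x + y + z) ≤ 3 := by
  classical
  have keyQ : ∀ M : Matrix (Fin 3 → Fin 2) (Fin 3 → Fin 2) ℂ,
      0 ≤ (Matrix.trace (ρ * (Mᴴ * M))).re := by
    intro M
    have h2 : Matrix.trace (ρ * (Mᴴ * M)) = Matrix.trace (M * ρ * Mᴴ) := by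
      rw [← mul_assoc, Matrix.trace_mul_comm, ← mul_assoc]
    rw [h2]
    have hP := hpsd.mul_mul_conjTranspose_same M
    have h3 : (0:ℂ) ≤ Matrix.trace (M * ρ * Mᴴ) := by
      rw [Matrix.trace]
      refine Finset.sum_nonneg fun i _ => ?_
      exact hP.diag_nonneg
    exact (Complex.le_def.mp h3).1
  have hsymm : Matrix.trace (ρ * PP pw2) = Matrix.trace (ρ * PP pw1) := by
    conv_rhs => rw [← Matrix.trace_transpose, Matrix.transpose_mul]
    rw [PP, permOp_transpose, hT, Matrix.trace_mul_comm, i1]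
  set g : ℝ := (Matrix.trace (ρ * PP pw1)).re with hgdef
  have hx' : (Matrix.trace (ρ * PP ppa)).re = x := hx.symm
  have hy' : (Matrix.trace (ρ * PP ppb)).re = y := hy.symm
  have hz' : (Matrix.trace (ρ * PP ppc)).re = z := hz.symm
  have h1' : Matrix.trace (ρ * PP 1) = 1 := by
    rw [PP, permOp_one, mul_one, htr]
  -- nonnegativity of qA
  have hqA : 0 ≤ 18 + 6*z - 12*x - 12*y := by
    have h := keyQ AA
    rw [hAH, idAA] at h
    simp only [Matrix.mul_add, Matrix.mul_sub, Matrix.mul_smul, Matrix.trace_add,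
      Matrix.trace_sub, Matrix.trace_smul, smul_eq_mul, h1'] at h
    simp only [Complex.add_re, Complex.sub_re, Complex.mul_re, Complex.re_ofNat,
      Complex.im_ofNat, Complex.one_re, Complex.one_im, hx', hy', hz'] at h
    linarith
  -- nonnegativity from the sign projector
  have hS : 0 ≤ 6 - 6*x - 6*y - 6*z + 12*g := by
    have h := keyQ MS
    rw [hMSH, idMS] at h
    simp only [MS, Matrix.mul_add, Matrix.mul_sub, Matrix.mul_smul, Matrix.trace_add,
      Matrix.trace_sub, Matrix.trace_smul, smul_eq_mul, h1', hsymm] at h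
    simp only [Complex.add_re, Complex.sub_re, Complex.mul_re, Complex.re_ofNat,
      Complex.im_ofNat, Complex.one_re, Complex.one_im, hx', hy', hz', ← hgdef] at h
    linarith
  -- the quadratic in t
  have hquad : ∀ t : ℝ, 0 ≤ (18 + 6*z - 12*x - 12*y) * (t*t)
      + (-12*(x-y)) * t + (4 + 2*x + 2*y - 4*z - 4*g) := by
    intro t
    have h := keyQ ((t:ℂ) • AA - BB)
    have hexp : ((t:ℂ) • AA - BB)ᴴ * ((t:ℂ) • AA - BB)
        = ((t:ℂ)*(t:ℂ)) • (AA*AA) - (t:ℂ) • (AA*BB) - (t:ℂ) • (BBH*AA) + BBH*BB := by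
      rw [conjTranspose_sub, conjTranspose_smul, hAH, hBH, Complex.star_def,
        Complex.conj_ofReal]
      simp only [sub_mul, mul_sub, smul_mul_assoc, mul_smul_comm, smul_smul]
      module
    rw [hexp, idAA, idBB, idBA, idAB] at h
    simp only [smul_add, smul_sub, smul_smul, Matrix.mul_add, Matrix.mul_sub,
      Matrix.mul_smul, Matrix.trace_add, Matrix.trace_sub, Matrix.trace_smul,
      smul_eq_mul, h1', hsymm] at h
    simp only [Complex.add_re, Complex.sub_re, Complex.mul_re, Complex.re_ofNat,
      Complex.im_ofNat, Complex.one_re, Complex.one_im, Complex.ofReal_re,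
      Complex.ofReal_im, Complex.mul_im, ← Complex.ofReal_pow, hx', hy', hz', ← hgdef] at h
    ring_nf at h ⊢
    linarith
  have hdisc := discrim_le_zero hquad
  rw [discrim] at hdisc
  nlinarith [hqA, hS, hdisc, hquad 0, mul_nonneg hqA hS]
end

section
/- For any density matrix ρ on (ℂ²)^⊗n, the n×n real symmetric matrix M with entries M_{ij} = tr((X_iX_j + Y_iY_j + Z_iZ_j)ρ) for i ≠ j and M_{ii} = 3 is positive semidefinite. -/
open Matrix
open scoped ComplexOrder

/-- The single-site operator acting as `A` on qubit `i` of `(ℂ²)^⊗n` and as the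
identity elsewhere. -/
noncomputable def siteOp (n : ℕ) (i : Fin n) (A : Matrix (Fin 2) (Fin 2) ℂ) :
    Matrix (Fin n → Fin 2) (Fin n → Fin 2) ℂ :=
  Matrix.of fun f g => if ∀ k, k ≠ i → f k = g k then A (f i) (g i) else 0

noncomputable def pauliX : Matrix (Fin 2) (Fin 2) ℂ := !![0, 1; 1, 0]
noncomputable def pauliY : Matrix (Fin 2) (Fin 2) ℂ := !![0, -Complex.I; Complex.I, 0]
noncomputable def pauliZ : Matrix (Fin 2) (Fin 2) ℂ := !![1, 0; 0, -1]

/-- Summing over functions that (effectively) agree with `f` off `i` reduces to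
a sum over the value at `i`. -/
lemma sum_update_aux (n : ℕ) (i : Fin n) (f : Fin n → Fin 2)
    (F : (Fin n → Fin 2) → ℂ)
    (hF : ∀ h, ¬(∀ k, k ≠ i → f k = h k) → F h = 0) :
    ∑ h, F h = ∑ a : Fin 2, F (Function.update f i a) := by
  classical
  rw [← Finset.sum_filter_of_ne
    (p := fun h : Fin n → Fin 2 => ∀ k, k ≠ i → f k = h k)
    (fun h _ hne => by by_contra hc; exact hne (hF h hc))]
  refine Finset.sum_nbij' (fun h => h i) (fun a => Function.update f i a)
    ?_ ?_ ?_ ?_ ?_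
  · intro a _; exact Finset.mem_univ _
  · intro a _
    simp only [Finset.mem_filter, Finset.mem_univ, true_and]
    intro k hk; rw [Function.update_of_ne hk]
  · intro h hh
    simp only [Finset.mem_filter, Finset.mem_univ, true_and] at hh
    funext k
    by_cases hk : k = i
    · subst hk; simp
    · show Function.update f i (h i) k = h k
      rw [Function.update_of_ne hk]; exact hh k hk
  · intro a _; simp
  · intro h hh
    simp only [Finset.mem_filter, Finset.mem_univ, true_and] at hh
    congr 1
    funext k
    by_cases hk : k = i
    · subst hk; simp
    · rw [Function.update_of_ne hk]; exact (hh k hk).symm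

lemma siteOp_mul_same (n : ℕ) (i : Fin n) (A B : Matrix (Fin 2) (Fin 2) ℂ) :
    siteOp n i A * siteOp n i B = siteOp n i (A * B) := by
  ext f g
  rw [Matrix.mul_apply]
  rw [sum_update_aux n i f _ (fun h hc => by
    simp only [siteOp, Matrix.of_apply, if_neg hc, zero_mul])]
  simp only [siteOp, Matrix.of_apply, Matrix.mul_apply]
  by_cases hfg : ∀ k, k ≠ i → f k = g k
  · rw [if_pos hfg, Finset.sum_congr rfl (fun a _ => ?_)]
    have h1 : ∀ k, k ≠ i → f k = Function.update f i a k := fun k hk => by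
      rw [Function.update_of_ne hk]
    have h2 : ∀ k, k ≠ i → Function.update f i a k = g k := fun k hk => by
      rw [Function.update_of_ne hk]; exact hfg k hk
    rw [if_pos h1, if_pos h2, Function.update_self]
  · rw [if_neg hfg]
    refine Finset.sum_eq_zero fun a _ => ?_
    have h2 : ¬(∀ k, k ≠ i → Function.update f i a k = g k) := by
      intro hc
      exact hfg fun k hk => by rw [← hc k hk, Function.update_of_ne hk]
    rw [if_neg h2, mul_zero]

lemma siteOp_mul_of_ne (n : ℕ) {i j : Fin n} (hij : i ≠ j)
    (A B : Matrix (Fin 2) (Fin 2) ℂ) :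
    siteOp n i A * siteOp n j B = Matrix.of fun f g =>
      if ∀ k, k ≠ i → k ≠ j → f k = g k then A (f i) (g i) * B (f j) (g j)
      else 0 := by
  ext f g
  rw [Matrix.mul_apply, Finset.sum_eq_single (Function.update f i (g i))]
  · simp only [siteOp, Matrix.of_apply]
    have h1 : ∀ k, k ≠ i → f k = Function.update f i (g i) k := fun k hk => by
      rw [Function.update_of_ne hk]
    rw [if_pos h1, Function.update_self, Function.update_of_ne (Ne.symm hij)]
    by_cases hc : ∀ k, k ≠ i → k ≠ j → f k = g k
    · have h2 : ∀ k, k ≠ j → Function.update f i (g i) k = g k := by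
        intro k hk
        by_cases hki : k = i
        · subst hki; simp
        · rw [Function.update_of_ne hki]; exact hc k hki hk
      rw [if_pos h2, if_pos hc]
    · have h2 : ¬(∀ k, k ≠ j → Function.update f i (g i) k = g k) := by
        intro hcc
        refine hc fun k hki hkj => ?_
        rw [← hcc k hkj, Function.update_of_ne hki]
      rw [if_neg h2, if_neg hc, mul_zero]
  · intro h _ hne
    simp only [siteOp, Matrix.of_apply]
    by_cases h1 : ∀ k, k ≠ i → f k = h k
    · by_cases h2 : ∀ k, k ≠ j → h k = g k
      · exfalso
        apply hne
        funext k
        by_cases hk : k = i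
        · rw [hk, Function.update_self]; exact h2 i hij
        · rw [Function.update_of_ne hk]; exact (h1 k hk).symm
      · rw [if_neg h2, mul_zero]
    · rw [if_neg h1, zero_mul]
  · intro hmem; exact absurd (Finset.mem_univ _) hmem

lemma siteOp_mul_comm (n : ℕ) {i j : Fin n} (hij : i ≠ j)
    (A B : Matrix (Fin 2) (Fin 2) ℂ) :
    siteOp n i A * siteOp n j B = siteOp n j B * siteOp n i A := by
  rw [siteOp_mul_of_ne n hij, siteOp_mul_of_ne n hij.symm]
  ext f g
  simp only [Matrix.of_apply]
  have hcond : (∀ k, k ≠ i → k ≠ j → f k = g k) ↔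
      (∀ k, k ≠ j → k ≠ i → f k = g k) := by
    constructor <;> intro h k h1 h2 <;> exact h k h2 h1
  rw [if_congr hcond (mul_comm _ _) rfl]

lemma siteOp_isHermitian (n : ℕ) (i : Fin n) {A : Matrix (Fin 2) (Fin 2) ℂ}
    (hA : A.IsHermitian) : (siteOp n i A).IsHermitian := by
  ext f g
  simp only [Matrix.conjTranspose_apply, siteOp, Matrix.of_apply]
  have hcond : (∀ k, k ≠ i → g k = f k) ↔ (∀ k, k ≠ i → f k = g k) := by
    constructor <;> intro h k hk <;> exact (h k hk).symm
  rw [apply_ite star, star_zero, if_congr hcond rfl rfl]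
  congr 1
  rw [← Matrix.conjTranspose_apply, hA.eq]

lemma siteOp_one (n : ℕ) (i : Fin n) : siteOp n i 1 = 1 := by
  ext f g
  simp only [siteOp, Matrix.of_apply, Matrix.one_apply]
  by_cases hfg : f = g
  · subst hfg; simp
  · by_cases hc : ∀ k, k ≠ i → f k = g k
    · rw [if_pos hc, if_neg hfg]
      by_cases hfi : f i = g i
      · exact absurd (funext fun k => by
          by_cases hk : k = i
          · subst hk; exact hfi
          · exact hc k hk) hfg
      · simp [Matrix.one_apply, hfi]
    · rw [if_neg hc, if_neg hfg]

lemma pauliX_herm : pauliX.IsHermitian := by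
  ext i j; fin_cases i <;> fin_cases j <;>
    simp [pauliX, Matrix.conjTranspose_apply]

lemma pauliY_herm : pauliY.IsHermitian := by
  ext i j; fin_cases i <;> fin_cases j <;>
    simp [pauliY, Matrix.conjTranspose_apply]

lemma pauliZ_herm : pauliZ.IsHermitian := by
  ext i j; fin_cases i <;> fin_cases j <;>
    simp [pauliZ, Matrix.conjTranspose_apply]

lemma pauliX_sq : pauliX * pauliX = 1 := by
  ext i j; fin_cases i <;> fin_cases j <;>
    simp [pauliX, Matrix.mul_apply, Fin.sum_univ_two, Matrix.one_apply]

lemma pauliY_sq : pauliY * pauliY = 1 := by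
  ext i j; fin_cases i <;> fin_cases j <;>
    simp [pauliY, Matrix.mul_apply, Fin.sum_univ_two, Matrix.one_apply,
      Complex.I_mul_I]

lemma pauliZ_sq : pauliZ * pauliZ = 1 := by
  ext i j; fin_cases i <;> fin_cases j <;>
    simp [pauliZ, Matrix.mul_apply, Fin.sum_univ_two, Matrix.one_apply]

/-- The trace of a positive semidefinite matrix is nonnegative. -/
lemma psd_trace_nonneg {m : Type*} [Fintype m] [DecidableEq m]
    {N : Matrix m m ℂ} (hN : N.PosSemidef) : 0 ≤ N.trace := by
  rw [Matrix.trace]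
  refine Finset.sum_nonneg fun i _ => ?_
  have := hN.dotProduct_mulVec_nonneg (Pi.single i 1)
  simpa [Matrix.mulVec_single, dotProduct, Pi.single_apply,
    Finset.sum_ite_eq', Matrix.diag] using this

theorem pauli_moment_matrix_psd (n : ℕ)
    (ρ : Matrix (Fin n → Fin 2) (Fin n → Fin 2) ℂ)
    (hpsd : ρ.PosSemidef) (htr : ρ.trace = 1)
    (M : Matrix (Fin n) (Fin n) ℝ)
    (hM : ∀ i j : Fin n, M i j = if i = j then 3 else
      (Matrix.trace ((siteOp n i pauliX * siteOp n j pauliX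
        + siteOp n i pauliY * siteOp n j pauliY
        + siteOp n i pauliZ * siteOp n j pauliZ) * ρ)).re) :
    M.PosSemidef := by
  classical
  -- the operator B i j
  set B : Fin n → Fin n → Matrix (Fin n → Fin 2) (Fin n → Fin 2) ℂ :=
    fun i j => siteOp n i pauliX * siteOp n j pauliX
      + siteOp n i pauliY * siteOp n j pauliY
      + siteOp n i pauliZ * siteOp n j pauliZ with hB
  have hBsymm : ∀ i j, B i j = B j i := by
    intro i j
    by_cases hij : i = j
    · subst hij; rfl
    · simp only [hB]
      rw [siteOp_mul_comm n hij, siteOp_mul_comm n hij, siteOp_mul_comm n hij]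
  have hBdiag : ∀ i, B i i = (3 : ℂ) • 1 := by
    intro i
    simp only [hB, siteOp_mul_same, pauliX_sq, pauliY_sq, pauliZ_sq, siteOp_one]
    ext f g
    simp only [Matrix.add_apply, Matrix.smul_apply, Matrix.one_apply, smul_eq_mul]
    split <;> norm_num
  have hMval : ∀ i j, M i j = (Matrix.trace (B i j * ρ)).re := by
    intro i j
    rw [hM i j]
    by_cases hij : i = j
    · subst hij
      rw [if_pos rfl, hBdiag, Matrix.smul_mul, one_mul, Matrix.trace_smul, htr]
      simp
    · rw [if_neg hij]
  rw [Matrix.posSemidef_iff_dotProduct_mulVec]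
  constructor
  · -- Hermitian (symmetric)
    ext i j
    simp only [Matrix.conjTranspose_apply, star_trivial]
    rw [hMval i j, hMval j i, hBsymm]
  · intro x
    set c : Fin n → ℂ := fun i => ((x i : ℝ) : ℂ) with hc
    set T : Fin n → Fin n → ℂ := fun i j => (B i j * ρ).trace with hT
    set AP : Matrix (Fin 2) (Fin 2) ℂ → Matrix (Fin n → Fin 2) (Fin n → Fin 2) ℂ :=
      fun P => ∑ i, c i • siteOp n i P with hAP
    have expand : ∀ P : Matrix (Fin 2) (Fin 2) ℂ,
        AP P * AP P = ∑ i, ∑ j, (c i * c j) • (siteOp n i P * siteOp n j P) := by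
      intro P
      rw [hAP, Finset.sum_mul_sum]
      refine Finset.sum_congr rfl fun i _ => Finset.sum_congr rfl fun j _ => ?_
      rw [Matrix.smul_mul, Matrix.mul_smul, smul_smul]
    have hherm : ∀ P : Matrix (Fin 2) (Fin 2) ℂ, P.IsHermitian → (AP P).IsHermitian := by
      intro P hP
      rw [Matrix.IsHermitian, hAP, Matrix.conjTranspose_sum]
      refine Finset.sum_congr rfl fun i _ => ?_
      rw [Matrix.conjTranspose_smul, (siteOp_isHermitian n i hP).eq]
      congr 1
      simp [hc, Complex.star_def, Complex.conj_ofReal]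
    have hpos : ∀ P : Matrix (Fin 2) (Fin 2) ℂ, P.IsHermitian →
        0 ≤ (AP P * AP P * ρ).trace := by
      intro P hP
      have hA := hherm P hP
      have h1 : (AP P * AP P * ρ).trace = (AP P * ρ * (AP P)ᴴ).trace := by
        rw [hA.eq, mul_assoc, Matrix.trace_mul_comm]
      rw [h1]
      exact psd_trace_nonneg (hpsd.mul_mul_conjTranspose_same _)
    have hexptr : ∀ P : Matrix (Fin 2) (Fin 2) ℂ,
        (AP P * AP P * ρ).trace
          = ∑ i, ∑ j, (c i * c j) * ((siteOp n i P * siteOp n j P) * ρ).trace := by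
      intro P
      rw [expand P, Finset.sum_mul, Matrix.trace_sum]
      refine Finset.sum_congr rfl fun i _ => ?_
      rw [Finset.sum_mul, Matrix.trace_sum]
      refine Finset.sum_congr rfl fun j _ => ?_
      rw [Matrix.smul_mul, Matrix.trace_smul, smul_eq_mul]
    have hdecomp :
        (AP pauliX * AP pauliX * ρ).trace + (AP pauliY * AP pauliY * ρ).trace
          + (AP pauliZ * AP pauliZ * ρ).trace
          = ∑ i, ∑ j, (c i * c j) * T i j := by
      rw [hexptr pauliX, hexptr pauliY, hexptr pauliZ,
        ← Finset.sum_add_distrib, ← Finset.sum_add_distrib]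
      refine Finset.sum_congr rfl fun i _ => ?_
      rw [← Finset.sum_add_distrib, ← Finset.sum_add_distrib]
      refine Finset.sum_congr rfl fun j _ => ?_
      rw [← mul_add, ← mul_add, hT]
      congr 1
      simp only [hB]
      rw [Matrix.add_mul, Matrix.add_mul, Matrix.trace_add, Matrix.trace_add]
    have h0 : (0 : ℂ) ≤ ∑ i, ∑ j, (c i * c j) * T i j := by
      rw [← hdecomp]
      have := add_nonneg (add_nonneg (hpos pauliX pauliX_herm)
        (hpos pauliY pauliY_herm)) (hpos pauliZ pauliZ_herm)
      exact this
    have hfinal : star x ⬝ᵥ M *ᵥ x = (∑ i, ∑ j, (c i * c j) * T i j).re := by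
      rw [Complex.re_sum]
      simp only [Complex.re_sum]
      simp only [dotProduct, Matrix.mulVec, Pi.star_apply, star_trivial]
      refine Finset.sum_congr rfl fun i _ => ?_
      rw [Finset.mul_sum]
      refine Finset.sum_congr rfl fun j _ => ?_
      have hcc : c i * c j = ((x i * x j : ℝ) : ℂ) := by simp [hc]
      rw [hcc, Complex.re_ofReal_mul, hMval i j]
      rw [show T i j = (B i j * ρ).trace from rfl]
      ring
    rw [hfinal]
    have := (Complex.le_def.mp h0).1
    simpa using this
end
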